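/- Let H be an N×N real symmetric tridiagonal matrix with N ≥ 2 whose eigenvalues λ_1 < λ_2 < ⋯ < λ_N are pairwise distinct. For each i set M_i = λ_i I_N − H. Then for every i ∈ {1, …, N}: 0 ≤ 2 ∑_{1 ≤ k < ℓ ≤ N, ℓ−k > 1} det((M_i)_{k|k}) · det((M_i)_{ℓ|ℓ}) ≤ ∏_{j ≠ i} (λ_i − λ_j)². -/

import Mathlib

open Polynomial Matrix Finset

private lemma updRow_sub {N : ℕ} (B : Matrix (Fin (N+1)) (Fin (N+1)) ℝ) (v : Fin (N+1) → ℝ)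
    (k : Fin N) (f : Fin N → Fin (N+1)) :
    (B.updateRow k.succ v).submatrix Fin.succ f = (B.submatrix Fin.succ f).updateRow k (v ∘ f) := by
  ext r s
  by_cases h : r = k
  · subst h; simp [Matrix.updateRow_apply]
  · simp [Matrix.updateRow_apply, h, Fin.succ_inj, Matrix.submatrix_apply]

private lemma detD : ∀ {N : ℕ} (B E : Matrix (Fin N) (Fin N) ℝ),
    (Polynomial.derivative ((B.map C + (X : ℝ[X]) • E.map C).det)).eval 0
      = ∑ k, (B.updateRow k (E k)).det := by
  intro N
  induction N with
  | zero => intro B E; simp [Matrix.det_fin_zero]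
  | succ N IH =>
    intro B E
    have hsub : ∀ j : Fin (N+1),
        (B.map C + (X : ℝ[X]) • E.map C).submatrix Fin.succ j.succAbove
          = (B.submatrix Fin.succ j.succAbove).map C
            + (X : ℝ[X]) • (E.submatrix Fin.succ j.succAbove).map C := by
      intro j; ext r s; simp
    have hD0 : ∀ (B' E' : Matrix (Fin N) (Fin N) ℝ),
        ((B'.map C + (X : ℝ[X]) • E'.map C).det).eval 0 = B'.det := by
      intro B' E'
      rw [_root_.eval_det_add_X_smul]
      rw [show B'.map C = (C : ℝ →+* ℝ[X]).mapMatrix B' from rfl, ← RingHom.map_det]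
      simp
    rw [Matrix.det_succ_row_zero]
    simp only [hsub, Matrix.add_apply, Matrix.map_apply, Matrix.smul_apply, smul_eq_mul]
    rw [map_sum, eval_finset_sum]
    have hterm : ∀ j : Fin (N+1),
        (Polynomial.derivative ((-1 : ℝ[X]) ^ (j : ℕ) * (C (B 0 j) + X * C (E 0 j))
            * ((B.submatrix Fin.succ j.succAbove).map C
              + (X : ℝ[X]) • (E.submatrix Fin.succ j.succAbove).map C).det)).eval 0
          = (-1 : ℝ) ^ (j : ℕ) * E 0 j * (B.submatrix Fin.succ j.succAbove).det
            + (-1 : ℝ) ^ (j : ℕ) * B 0 j *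
              ∑ k, ((B.submatrix Fin.succ j.succAbove).updateRow k
                (E k.succ ∘ j.succAbove)).det := by
      intro j
      have hder := IH (B.submatrix Fin.succ j.succAbove) (E.submatrix Fin.succ j.succAbove)
      simp only [derivative_mul, derivative_pow, derivative_neg, derivative_one,
        derivative_add, derivative_C, derivative_X, eval_add, eval_mul, eval_pow, eval_neg,
        eval_one, eval_C, eval_X, mul_zero, zero_mul, add_zero, zero_add, mul_one, neg_zero]
      rw [hD0, hder]
      have : ∀ k, (E.submatrix Fin.succ j.succAbove) k = E k.succ ∘ j.succAbove := fun _ => rfl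
      simp only [this]
      ring
    rw [Finset.sum_congr rfl fun j _ => hterm j]
    rw [Finset.sum_add_distrib]
    rw [Fin.sum_univ_succ (fun k : Fin (N+1) => (B.updateRow k (E k)).det)]
    congr 1
    · rw [Matrix.det_succ_row_zero (B.updateRow 0 (E 0))]
      refine Finset.sum_congr rfl fun j _ => ?_
      rw [Matrix.updateRow_self]
      rw [show (Fin.succ : Fin N → Fin (N+1)) = (0 : Fin (N+1)).succAbove from
        (Fin.succAbove_zero).symm, Matrix.submatrix_updateRow_succAbove]
    · simp only [Finset.mul_sum]
      rw [Finset.sum_comm]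
      refine Finset.sum_congr rfl fun k _ => ?_
      rw [Matrix.det_succ_row_zero (B.updateRow k.succ (E k.succ))]
      refine Finset.sum_congr rfl fun j _ => ?_
      rw [Matrix.updateRow_ne (Fin.succ_ne_zero k).symm, updRow_sub]

private lemma adj_diag_prod_nonneg {N : ℕ} (A : Matrix (Fin (N+2)) (Fin (N+2)) ℝ)
    (hA : Aᵀ = A) (hdet : A.det = 0) (k l : Fin (N+2)) :
    0 ≤ A.adjugate k k * A.adjugate l l := by
  rcases eq_or_ne k l with rfl | hkl
  · exact mul_self_nonneg _
  set B := A.adjugate with hB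
  have hBsymm : ∀ a b, B a b = B b a := by
    intro a b
    conv_lhs => rw [hB, ← hA, ← Matrix.adjugate_transpose, Matrix.transpose_apply]
  have hAB : A * B = 0 := by rw [hB, Matrix.mul_adjugate, hdet, zero_smul]
  -- the candidate kernel vector
  set z : Fin (N+2) → ℝ := fun m => B l l * B m k - B l k * B m l with hzdef
  have hz : A.mulVec z = 0 := by
    funext r
    have h1 : (A * B) r k = 0 := by rw [hAB]; rfl
    have h2 : (A * B) r l = 0 := by rw [hAB]; rfl
    rw [Matrix.mul_apply] at h1 h2
    simp only [Matrix.mulVec, dotProduct, hzdef, Pi.zero_apply]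
    simp only [mul_sub]
    rw [Finset.sum_sub_distrib]
    have e1 : ∑ x, A r x * (B l l * B x k) = B l l * ∑ x, A r x * B x k := by
      rw [Finset.mul_sum]; exact Finset.sum_congr rfl fun x _ => by ring
    have e2 : ∑ x, A r x * (B l k * B x l) = B l k * ∑ x, A r x * B x l := by
      rw [Finset.mul_sum]; exact Finset.sum_congr rfl fun x _ => by ring
    rw [e1, e2, h1, h2]
    ring
  have hzl : z l = 0 := by simp only [hzdef]; ring
  suffices hkey : B k k * B l l = B k l * B l k by
    rw [hkey, hBsymm l k]; exact mul_self_nonneg _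
  by_contra hS
  -- z is nonzero at k
  obtain ⟨k', hk'⟩ := Fin.exists_succAbove_eq hkl
  have hzk : z k ≠ 0 := by
    simp only [hzdef]; intro h; apply hS; linarith [h]
  -- restricted vector
  set v : Fin (N+1) → ℝ := fun s => z (l.succAbove s) with hvdef
  have hv : v ≠ 0 := by
    intro h
    apply hzk
    rw [← hk']
    exact congrFun h k'
  have hker : ∀ f : Fin (N+1) → Fin (N+2),
      (A.submatrix f l.succAbove).mulVec v = 0 := by
    intro f
    funext r
    have h0 : (A.mulVec z) (f r) = 0 := by rw [hz]; rfl
    rw [Matrix.mulVec, dotProduct] at h0 ⊢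
    rw [Fin.sum_univ_succAbove (fun m => A (f r) m * z m) l] at h0
    simp only [hzl, mul_zero, zero_add] at h0
    simpa using h0
  -- B l l = 0
  have hBll : B l l = 0 := by
    have hd : (A.submatrix l.succAbove l.succAbove).det = 0 :=
      Matrix.exists_mulVec_eq_zero_iff.mp ⟨v, hv, hker l.succAbove⟩
    rw [hB, Matrix.adjugate_fin_succ_eq_det_submatrix, hd, mul_zero]
  -- B k l = 0
  have hBkl : B k l = 0 := by
    have hd : (A.submatrix k.succAbove l.succAbove).det = 0 :=
      Matrix.exists_mulVec_eq_zero_iff.mp ⟨v, hv, hker k.succAbove⟩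
    have hd2 : (A.submatrix l.succAbove k.succAbove).det = 0 := by
      rw [← Matrix.det_transpose, Matrix.transpose_submatrix, hA, hd]
    rw [hB, Matrix.adjugate_fin_succ_eq_det_submatrix, hd2, mul_zero]
  apply hS
  rw [hBll, hBkl, hBsymm l k, hBkl, mul_zero, mul_zero]


/-- Let `H` be an `N×N` real symmetric tridiagonal matrix (`N ≥ 2`)
with pairwise distinct eigenvalues `λ_1 < ⋯ < λ_N`, and set `M_i = λ_i I − H`.  Then
for every `i`:
`0 ≤ 2 ∑_{ℓ−k>1} det((M_i)_{k|k}) · det((M_i)_{ℓ|ℓ}) ≤ ∏_{j≠i} (λ_i − λ_j)²`. -/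
theorem tridiagonal_gap_minor_sum_bounds {n : ℕ}
    (H : Matrix (Fin (n + 2)) (Fin (n + 2)) ℝ)
    (hsymm : H.IsSymm)
    (htri : ∀ i j : Fin (n + 2), (i : ℕ) + 1 < (j : ℕ) → H i j = 0)
    (lam : Fin (n + 2) → ℝ) (hmono : StrictMono lam)
    (hchar : H.charpoly = ∏ j, (Polynomial.X - Polynomial.C (lam j)))
    (M : Fin (n + 2) → Matrix (Fin (n + 2)) (Fin (n + 2)) ℝ)
    (hM : ∀ i, M i = lam i • (1 : Matrix (Fin (n + 2)) (Fin (n + 2)) ℝ) - H)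
    (i : Fin (n + 2)) :
    0 ≤ 2 * ∑ p ∈ Finset.univ.filter
            (fun p : Fin (n + 2) × Fin (n + 2) => (p.1 : ℕ) + 1 < (p.2 : ℕ)),
          ((M i).submatrix p.1.succAbove p.1.succAbove).det
            * ((M i).submatrix p.2.succAbove p.2.succAbove).det
    ∧ 2 * ∑ p ∈ Finset.univ.filter
            (fun p : Fin (n + 2) × Fin (n + 2) => (p.1 : ℕ) + 1 < (p.2 : ℕ)),
          ((M i).submatrix p.1.succAbove p.1.succAbove).det
            * ((M i).submatrix p.2.succAbove p.2.succAbove).det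
        ≤ ∏ j ∈ Finset.univ.erase i, (lam i - lam j) ^ 2 := by
  classical
  -- symmetry of M i
  have hAt : (M i)ᵀ = M i := by
    rw [hM i, Matrix.transpose_sub, Matrix.transpose_smul, Matrix.transpose_one, hsymm.eq]
  -- evaluation of the shifted determinant polynomial
  have hmapq : ∀ t : ℝ,
      (((M i).map C + (X : ℝ[X]) • (1 : Matrix (Fin (n+2)) (Fin (n+2)) ℝ).map C).det).eval t
        = ((lam i + t) • (1 : Matrix (Fin (n+2)) (Fin (n+2)) ℝ) - H).det := by
    intro t
    rw [← Polynomial.coe_evalRingHom, RingHom.map_det]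
    congr 1
    ext a b
    simp only [RingHom.mapMatrix_apply, Matrix.map_apply, Matrix.add_apply, Matrix.smul_apply,
      smul_eq_mul, eval_add, eval_mul, eval_C, eval_X, Polynomial.coe_evalRingHom,
      Matrix.sub_apply, hM i, Matrix.one_apply]
    split_ifs <;> ring
  have hcharev : ∀ s : ℝ,
      ((s • (1 : Matrix (Fin (n+2)) (Fin (n+2)) ℝ) - H)).det = ∏ j, (s - lam j) := by
    intro s
    have h1 : (Polynomial.evalRingHom s) H.charpoly
        = ((s • (1 : Matrix (Fin (n+2)) (Fin (n+2)) ℝ) - H)).det := by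
      rw [Matrix.charpoly, RingHom.map_det]
      congr 1
      ext a b
      rcases eq_or_ne a b with rfl | hab
      · simp [Matrix.charmatrix_apply_eq, Matrix.one_apply]
      · simp [Matrix.charmatrix_apply_ne _ _ _ hab, Matrix.one_apply, hab]
    rw [← h1, hchar, map_prod]
    simp
  have hqe : ∀ t : ℝ,
      (((M i).map C + (X : ℝ[X]) • (1 : Matrix (Fin (n+2)) (Fin (n+2)) ℝ).map C).det).eval t
        = ∏ j, (lam i + t - lam j) := fun t => by rw [hmapq t, hcharev]
  have hq : ((M i).map C + (X : ℝ[X]) • (1 : Matrix (Fin (n+2)) (Fin (n+2)) ℝ).map C).det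
      = X * ∏ j ∈ Finset.univ.erase i, (X + C (lam i - lam j)) := by
    apply Polynomial.funext
    intro t
    rw [hqe t, eval_mul, eval_X, eval_prod]
    rw [← Finset.mul_prod_erase Finset.univ _ (Finset.mem_univ i)]
    simp only [eval_add, eval_X, eval_C]
    rw [(by ring : lam i + t - lam i = t)]
    exact congrArg _ (Finset.prod_congr rfl fun j _ => by ring)
  have hdetA : (M i).det = 0 := by
    have h0 := hmapq 0
    rw [hq] at h0
    simp only [eval_mul, eval_X, zero_mul] at h0
    rw [show ((lam i + 0) • (1 : Matrix (Fin (n+2)) (Fin (n+2)) ℝ) - H) = M i by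
      rw [hM i, add_zero]] at h0
    exact h0.symm
  -- trace of the adjugate
  have hT : ∑ k, (M i).adjugate k k = ∏ j ∈ Finset.univ.erase i, (lam i - lam j) := by
    have h1 := detD (M i) 1
    have h2 : ∀ k : Fin (n+2),
        ((M i).updateRow k ((1 : Matrix (Fin (n+2)) (Fin (n+2)) ℝ) k)).det
          = (M i).adjugate k k := by
      intro k
      have h1k : (1 : Matrix (Fin (n+2)) (Fin (n+2)) ℝ) k = Pi.single k 1 := by
        funext j
        rw [Matrix.one_apply, Pi.single_apply]
        exact if_congr eq_comm rfl rfl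
      rw [h1k, Matrix.adjugate_apply]
    rw [Finset.sum_congr rfl fun k _ => h2 k] at h1
    rw [← h1, hq, derivative_mul, derivative_X, one_mul]
    simp only [eval_add, eval_mul, eval_X, zero_mul, add_zero, eval_prod, eval_C, zero_add]
  -- diagonal adjugate entries equal the principal minors
  have hdk : ∀ k : Fin (n+2),
      ((M i).submatrix k.succAbove k.succAbove).det = (M i).adjugate k k := by
    intro k
    rw [Matrix.adjugate_fin_succ_eq_det_submatrix,
      Even.neg_one_pow ⟨(k : ℕ), rfl⟩, one_mul]
  have hdd : ∀ k l : Fin (n+2), 0 ≤ (M i).adjugate k k * (M i).adjugate l l :=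
    fun k l => adj_diag_prod_nonneg (M i) hAt hdetA k l
  simp only [hdk]
  set d : Fin (n+2) → ℝ := fun k => (M i).adjugate k k with hddef
  set E1 : Finset (Fin (n+2) × Fin (n+2)) := Finset.univ.filter
      (fun p : Fin (n + 2) × Fin (n + 2) => (p.1 : ℕ) + 1 < (p.2 : ℕ)) with hE1
  constructor
  · have h0 : 0 ≤ ∑ p ∈ E1, d p.1 * d p.2 := Finset.sum_nonneg fun p _ => hdd _ _
    linarith
  · set E2 : Finset (Fin (n+2) × Fin (n+2)) := Finset.univ.filter
        (fun p : Fin (n + 2) × Fin (n + 2) => (p.2 : ℕ) + 1 < (p.1 : ℕ)) with hE2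
    have hswap : ∑ p ∈ E1, d p.1 * d p.2 = ∑ p ∈ E2, d p.1 * d p.2 := by
      refine Finset.sum_bij' (fun p _ => Prod.swap p) (fun p _ => Prod.swap p) ?_ ?_ ?_ ?_ ?_
      · intro p hp; simp only [hE1, hE2, Finset.mem_filter, Finset.mem_univ, true_and,
          Prod.fst_swap, Prod.snd_swap] at hp ⊢; exact hp
      · intro p hp; simp only [hE1, hE2, Finset.mem_filter, Finset.mem_univ, true_and,
          Prod.fst_swap, Prod.snd_swap] at hp ⊢; exact hp
      · intro p _; simp
      · intro p _; simp
      · intro p _; simp [mul_comm]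
    have hdisj : Disjoint E1 E2 := by
      rw [Finset.disjoint_left]
      intro p h1 h2
      simp only [hE1, hE2, Finset.mem_filter] at h1 h2
      omega
    have htot : ∑ p : Fin (n+2) × Fin (n+2), d p.1 * d p.2 = (∑ k, d k) * (∑ k, d k) := by
      rw [Finset.sum_mul_sum]
      exact Fintype.sum_prod_type _
    have hle : ∑ p ∈ E1 ∪ E2, d p.1 * d p.2 ≤ ∑ p : Fin (n+2) × Fin (n+2), d p.1 * d p.2 :=
      Finset.sum_le_sum_of_subset_of_nonneg (Finset.subset_univ _) fun p _ _ => hdd _ _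
    rw [Finset.sum_union hdisj] at hle
    have hP : ∏ j ∈ Finset.univ.erase i, (lam i - lam j) ^ 2
        = (∑ k, d k) * (∑ k, d k) := by
      rw [Finset.prod_pow, ← hT, sq]
    calc 2 * ∑ p ∈ E1, d p.1 * d p.2 = ∑ p ∈ E1, d p.1 * d p.2 + ∑ p ∈ E2, d p.1 * d p.2 := by
          rw [← hswap]; ring
      _ ≤ (∑ k, d k) * (∑ k, d k) := by rw [← htot]; exact hle
      _ = ∏ j ∈ Finset.univ.erase i, (lam i - lam j) ^ 2 := hP.symm
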